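/- In the specific null foliation adapted frame (s, M, α♯, n), where M is the vector field with components M^r = g^{r3}g^{34} − g^{33}g^{r4} in a null foliation adapted chart (so M♭ = g³⁴dx³ − g³³dx⁴ is null and M ∈ ker F), one has *d*M♭ = 0 (equivalently ∇_μ M^μ = 0) if and only if dM♭(n,M) + dα(M,α♯) + ds♭(M,s) = 0. -/

import Mathlib

noncomputable section

namespace FFE

/-- Points of the chart domain `U_p ⊆ M` of a spacetime, in coordinates
`(x¹,…,x⁴)` (indexed here by `0,…,3`, so `x³ ↦ 2` and `x⁴ ↦ 3`). -/
abbrev Pt : Type := Fin 4 → ℝ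

/-- Scalar fields. -/
abbrev Sc : Type := Pt → ℝ

/-- Vector fields, given by their chart components. -/
abbrev Vec : Type := Fin 4 → Sc

/-- Covector fields (1-forms), given by their chart components. -/
abbrev Cov : Type := Fin 4 → Sc

/-- 2-forms, given by their (antisymmetric) chart components. -/
abbrev Form2 : Type := Fin 4 → Fin 4 → Sc

/-- Partial derivative along the `i`-th coordinate. -/
def pd (i : Fin 4) (f : Sc) : Sc := fun p => fderiv ℝ f p (Pi.single i 1)

/-- Smoothness of a scalar field. -/
def Smooth (f : Sc) : Prop := ContDiff ℝ (⊤ : ℕ∞) f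

/-- Directional derivative of a scalar field along a vector field. -/
def act (v : Vec) (f : Sc) : Sc := ∑ i, v i * pd i f

/-- Lie bracket of vector fields. -/
def bracket (v w : Vec) : Vec := fun μ => act v (w μ) - act w (v μ)

/-- Exterior derivative of a 1-form, evaluated on two vector fields:
`dω(v,w) = (∂_μ ω_ν − ∂_ν ω_μ) v^μ w^ν`. -/
def dOne (ω : Cov) (v w : Vec) : Sc :=
  ∑ μ, ∑ ν, (pd μ (ω ν) - pd ν (ω μ)) * v μ * w ν

/-- `log |f|`. -/
def logabs (f : Sc) : Sc := fun p => Real.log |f p|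

/-- A (smooth) Lorentzian metric of signature `(-1,1,1,1)`, given in a chart by its
covariant components `gdown`, contravariant components `ginv`, and volume factor
`vol = √(−det g)`. -/
structure Lorentzian where
  gdown : Fin 4 → Fin 4 → Sc
  ginv : Fin 4 → Fin 4 → Sc
  vol : Sc
  smooth_gdown : ∀ μ ν, Smooth (gdown μ ν)
  smooth_ginv : ∀ μ ν, Smooth (ginv μ ν)
  smooth_vol : Smooth vol
  symm_gdown : ∀ μ ν, gdown μ ν = gdown ν μ
  symm_ginv : ∀ μ ν, ginv μ ν = ginv ν μ
  inv_gdown : ∀ μ ν p, (∑ ρ, ginv μ ρ p * gdown ρ ν p) = if μ = ν then 1 else 0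
  vol_pos : ∀ p, 0 < vol p
  vol_sq : ∀ p, vol p ^ 2 = -Matrix.det (Matrix.of fun μ ν => gdown μ ν p)
  signature : ∀ p, ∃ e : Fin 4 → Fin 4 → ℝ, ∀ i j,
    (∑ μ, ∑ ν, gdown μ ν p * e i μ * e j ν) =
      if i = j then (if i = 0 then -1 else 1) else 0

namespace Lorentzian

variable (g : Lorentzian)

/-- Lowering an index: `v ↦ v♭`. -/
def flat (v : Vec) : Cov := fun μ => ∑ ν, g.gdown μ ν * v ν

/-- Raising an index: `ω ↦ ω♯`. -/
def sharp (ω : Cov) : Vec := fun μ => ∑ ν, g.ginv μ ν * ω ν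

/-- Metric pairing `g(v,w)` of vector fields. -/
def inner (v w : Vec) : Sc := ∑ μ, ∑ ν, g.gdown μ ν * v μ * w ν

/-- Christoffel symbols of the Levi-Civita connection. -/
def christoffel (μ ν ρ : Fin 4) : Sc := fun p =>
  (1 / 2) * ∑ σ, g.ginv μ σ p *
    (pd ν (g.gdown σ ρ) p + pd ρ (g.gdown σ ν) p - pd σ (g.gdown ν ρ) p)

/-- Covariant derivative `∇_v w` of the Levi-Civita connection. -/
def nabla (v w : Vec) : Vec := fun μ =>
  (∑ ν, v ν * pd ν (w μ)) + ∑ ν, ∑ ρ, g.christoffel μ ν ρ * v ν * w ρ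

/-- Divergence `∇_μ X^μ = (1/√(−g)) ∂_μ (√(−g) X^μ)`. -/
def div (v : Vec) : Sc := fun p =>
  (g.vol p)⁻¹ * ∑ μ, pd μ (fun q => g.vol q * v μ q) p

/-- Raising both indices of a 2-form. -/
def up2 (F : Form2) : Form2 := fun μ ν => ∑ ρ, ∑ σ, g.ginv μ ρ * g.ginv ν σ * F ρ σ

/-- The full contraction `F_{μν} F^{μν}`. -/
def contract2 (F : Form2) : Sc := ∑ μ, ∑ ν, F μ ν * g.up2 F μ ν

/-- The current density vector `j = *(d*F)`, in components
`j^μ = (1/√(−g)) ∂_ν (√(−g) F^{μν})`. -/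
def current (F : Form2) : Vec := fun μ => fun p =>
  (g.vol p)⁻¹ * ∑ ν, pd ν (fun q => g.vol q * g.up2 F μ ν q) p

/-- `F` is a null 2-form: `F_{μν}F^{μν} = 0`. -/
def IsNull (F : Form2) : Prop := g.contract2 F = 0

/-- The force-free condition `i_{j♯} F = 0` for the current `j` of `F`. -/
def ForceFree (F : Form2) : Prop := ∀ ν, (∑ μ, F μ ν * g.current F μ) = 0

end Lorentzian

/-- `dF = 0` for a 2-form. -/
def Closed (F : Form2) : Prop :=
  ∀ μ ν ρ, pd μ (F ν ρ) + pd ν (F ρ μ) + pd ρ (F μ ν) = 0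

/-- The Levi-Civita alternating symbol. -/
def eps (μ ν ρ σ : Fin 4) : ℝ :=
  Matrix.det (Matrix.of fun i j => if (![μ, ν, ρ, σ] i) = j then (1 : ℝ) else 0)

/-- Hodge star of a 2-form: `(*F)_{μν} = ½ √(−g) ε_{μνρσ} F^{ρσ}`. -/
def Lorentzian.hodge2 (g : Lorentzian) (F : Form2) : Form2 := fun μ ν => fun p =>
  (1 / 2) * g.vol p * ∑ ρ, ∑ σ, eps μ ν ρ σ * g.up2 F ρ σ p

/-- Exterior derivative of a 2-form (components of the 3-form `dG`). -/
def dTwo (G : Form2) : Fin 4 → Fin 4 → Fin 4 → Sc := fun μ ν ρ =>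
  pd μ (G ν ρ) + pd ν (G ρ μ) + pd ρ (G μ ν)

/-- The (scalar density representing the) wedge product of a 3-form with a 1-form. -/
def wedge31 (J : Fin 4 → Fin 4 → Fin 4 → Sc) (ω : Cov) : Sc := fun p =>
  ∑ μ, ∑ ν, ∑ ρ, ∑ σ, eps μ ν ρ σ * J μ ν ρ p * ω σ p

/-- The chart is adapted to a *null* foliation: on the leaves (the level sets of
`(x³,x⁴)`) the metric is degenerate, i.e. `g³³g⁴⁴ − (g³⁴)² = 0`. -/
def Lorentzian.NullAdapted (g : Lorentzian) : Prop :=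
  ∀ p, g.ginv 2 2 p * g.ginv 3 3 p - (g.ginv 2 3 p) ^ 2 = 0

/-- `M^r = g^{r3} g^{34} − g^{33} g^{r4}` (coordinates `x³,x⁴` are indices `2,3`). -/
def Mvec (g : Lorentzian) : Vec := fun r =>
  g.ginv r 2 * g.ginv 2 3 - g.ginv 2 2 * g.ginv r 3

/-- `N^r = g^{r3} g^{44} − g^{34} g^{r4}`. -/
def Nvec (g : Lorentzian) : Vec := fun r =>
  g.ginv r 2 * g.ginv 3 3 - g.ginv 2 3 * g.ginv r 3

/-- A null foliation adapted frame `(s, l, α♯, n)`: `l, n` null, `s, α♯` unit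
spacelike, `g(n,l) = −1`, all other frame inner products zero, spanning `TM`. -/
structure Frame (g : Lorentzian) (s l a n : Vec) : Prop where
  smooth_s : ∀ μ, Smooth (s μ)
  smooth_l : ∀ μ, Smooth (l μ)
  smooth_a : ∀ μ, Smooth (a μ)
  smooth_n : ∀ μ, Smooth (n μ)
  l_null : g.inner l l = 0
  n_null : g.inner n n = 0
  s_unit : g.inner s s = 1
  a_unit : g.inner a a = 1
  n_l : g.inner n l = -1
  n_s : g.inner n s = 0
  n_a : g.inner n a = 0
  l_s : g.inner l s = 0
  l_a : g.inner l a = 0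
  s_a : g.inner s a = 0
  spans : ∀ (p : Pt) (v : Fin 4 → ℝ), ∃ c : Fin 4 → ℝ,
    ∀ μ, v μ = c 0 * s μ p + c 1 * l μ p + c 2 * a μ p + c 3 * n μ p

/-- `l` is a pregeodesic vector field: `∇_l l` is everywhere proportional to `l`. -/
def Pregeodesic (g : Lorentzian) (l : Vec) : Prop :=
  ∃ f : Sc, g.nabla l l = fun μ => f * l μ

/-- The null expansion scalar `θ = ½[g(∇_s l, s) + g(∇_{α♯} l, α♯)]`. -/
def theta (g : Lorentzian) (l s a : Vec) : Sc :=
  (1 / 2 : Sc) * (g.inner (g.nabla s l) s + g.inner (g.nabla a l) a)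

/-- The foliation admits an equipartition of null mean curvature w.r.t. `l`:
`θ = g(∇_s l, s)`. -/
def Equipartition (g : Lorentzian) (l s a : Vec) : Prop :=
  theta g l s a = g.inner (g.nabla s l) s

/-- `l` admits a uniform equipartition of null mean curvature:
`g(∇_s l, α♯) + g(∇_{α♯} l, s) = 0`. -/
def UniformEquipartition (g : Lorentzian) (l s a : Vec) : Prop :=
  g.inner (g.nabla s l) a + g.inner (g.nabla a l) s = 0

/-- `v` lies in the kernel of the 2-form `F`. -/
def InKernel (F : Form2) (v : Vec) : Prop := ∀ μ, (∑ ν, F μ ν * v ν) = 0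

/-- The kernel of `F` consists at each point exactly of the vectors tangent to the
leaves of the adapted chart (those with vanishing `x³`- and `x⁴`-components). -/
def KernelExact (F : Form2) : Prop :=
  ∀ (p : Pt) (v : Fin 4 → ℝ),
    (∀ μ, (∑ ν, F μ ν p * v ν) = 0) ↔ (v 2 = 0 ∧ v 3 = 0)

/-- The kernel of `F` is at each point exactly the span of `v` and `w`. -/
def KernelSpan (F : Form2) (v w : Vec) : Prop :=
  ∀ (p : Pt) (x : Fin 4 → ℝ),
    (∀ μ, (∑ ν, F μ ν p * x ν) = 0) ↔ ∃ c d : ℝ, ∀ μ, x μ = c * v μ p + d * w μ p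

/-- `u` is a function of `(x³,x⁴)` alone (constant along the leaves). -/
def LeafConstant (u : Sc) : Prop := pd 0 u = 0 ∧ pd 1 u = 0

/-- The 2-form `F = u dx³ ∧ dx⁴`. -/
def chartF (u : Sc) : Form2 := fun μ ν =>
  u * ((if μ = 2 ∧ ν = 3 then (1 : Sc) else 0) - if μ = 3 ∧ ν = 2 then (1 : Sc) else 0)

/-- The transition factor `κ = (α₃ l♭₄ − α₄ l♭₃)⁻¹`. -/
def kappa (g : Lorentzian) (a l : Vec) : Sc :=
  (g.flat a 2 * g.flat l 3 - g.flat a 3 * g.flat l 2)⁻¹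

/-- The 2-form `F = (u·κ) α ∧ l♭` (with `α = a♭`). -/
def frameF (g : Lorentzian) (a l : Vec) (u : Sc) : Form2 := fun μ ν =>
  u * kappa g a l * (g.flat a μ * g.flat l ν - g.flat a ν * g.flat l μ)

/-! ### Auxiliary development for Statement 15 -/

section Statement15Aux

open Finset

/-! #### Calculus lemmas for `pd` -/

theorem Smooth.diff {f : Sc} (hf : Smooth f) : Differentiable ℝ f :=
  hf.differentiable (by simp)

theorem pd_const' (i : Fin 4) (c : ℝ) (p : Pt) : pd i (fun _ => c) p = 0 := by
  simp [pd]

theorem pd_zero' (i : Fin 4) (p : Pt) : pd i (0 : Sc) p = 0 := pd_const' i 0 p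

theorem pd_one' (i : Fin 4) (p : Pt) : pd i (1 : Sc) p = 0 := pd_const' i 1 p

theorem pd_add' {f h : Sc} (hf : Differentiable ℝ f) (hh : Differentiable ℝ h)
    (i : Fin 4) (p : Pt) :
    pd i (fun q => f q + h q) p = pd i f p + pd i h p := by
  simp only [pd, fderiv_fun_add (hf p) (hh p)]
  simp

theorem pd_neg' (f : Sc) (i : Fin 4) (p : Pt) :
    pd i (fun q => -f q) p = -pd i f p := by
  simp only [pd, fderiv_neg]
  simp

theorem pd_sub' {f h : Sc} (hf : Differentiable ℝ f) (hh : Differentiable ℝ h)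
    (i : Fin 4) (p : Pt) :
    pd i (fun q => f q - h q) p = pd i f p - pd i h p := by
  simp only [pd, fderiv_fun_sub (hf p) (hh p)]
  simp

theorem pd_mul' {f h : Sc} (hf : Differentiable ℝ f) (hh : Differentiable ℝ h)
    (i : Fin 4) (p : Pt) :
    pd i (fun q => f q * h q) p = f p * pd i h p + h p * pd i f p := by
  simp only [pd, fderiv_fun_mul (hf p) (hh p)]
  simp

theorem pd_const_mul' {f : Sc} (hf : Differentiable ℝ f) (c : ℝ) (i : Fin 4) (p : Pt) :
    pd i (fun q => c * f q) p = c * pd i f p := by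
  simp only [pd, fderiv_const_mul (hf p) c]
  simp

theorem pd_sum' {ι : Type} (s : Finset ι) (F : ι → Sc)
    (hF : ∀ j ∈ s, Differentiable ℝ (F j)) (i : Fin 4) (p : Pt) :
    pd i (fun q => ∑ j ∈ s, F j q) p = ∑ j ∈ s, pd i (F j) p := by
  simp only [pd, fderiv_fun_sum (fun j hj => (hF j hj) p)]
  simp

theorem pd_mul3' {f1 f2 f3 : Sc} (h1 : Differentiable ℝ f1) (h2 : Differentiable ℝ f2)
    (h3 : Differentiable ℝ f3) (i : Fin 4) (p : Pt) :
    pd i (fun q => f1 q * f2 q * f3 q) p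
      = pd i f1 p * f2 p * f3 p + f1 p * pd i f2 p * f3 p + f1 p * f2 p * pd i f3 p := by
  have h12 := pd_mul' (f := fun q => f1 q * f2 q) (h := f3) (h1.mul h2) h3 i p
  rw [h12, pd_mul' h1 h2 i p]
  ring

theorem diff_prod {ι : Type} [DecidableEq ι] (s : Finset ι) (F : ι → Sc)
    (hF : ∀ j, Differentiable ℝ (F j)) :
    Differentiable ℝ (fun q => ∏ j ∈ s, F j q) := by
  induction s using Finset.induction_on with
  | empty => simpa using (differentiable_const (1 : ℝ))
  | @insert c s hc ih =>
    have : (fun q => ∏ j ∈ insert c s, F j q) = fun q => F c q * ∏ j ∈ s, F j q := by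
      funext q; rw [Finset.prod_insert hc]
    rw [this]
    exact (hF c).mul ih

theorem pd_prod' {ι : Type} [DecidableEq ι] (s : Finset ι) (F : ι → Sc)
    (hF : ∀ j, Differentiable ℝ (F j)) (i : Fin 4) (p : Pt) :
    pd i (fun q => ∏ j ∈ s, F j q) p
      = ∑ j ∈ s, pd i (F j) p * ∏ k ∈ s.erase j, F k p := by
  induction s using Finset.induction_on with
  | empty =>
    simp only [Finset.prod_empty, Finset.sum_empty]
    exact pd_const' i 1 p
  | @insert c s hc ih =>
    have h1 : (fun q => ∏ j ∈ insert c s, F j q) = fun q => F c q * ∏ j ∈ s, F j q := by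
      funext q; rw [Finset.prod_insert hc]
    rw [h1, pd_mul' (hF c) (diff_prod s F hF) i p]
    rw [ih, Finset.sum_insert hc, Finset.erase_insert hc, Finset.mul_sum]
    have h2 : ∀ j ∈ s, F c p * (pd i (F j) p * ∏ k ∈ s.erase j, F k p)
        = pd i (F j) p * ∏ k ∈ (insert c s).erase j, F k p := by
      intro j hj
      have hja : j ≠ c := fun h => hc (h ▸ hj)
      rw [Finset.erase_insert_of_ne (Ne.symm hja),
        Finset.prod_insert (fun h => hc (Finset.mem_of_mem_erase h))]
      ring
    rw [Finset.sum_congr rfl h2]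
    ring

/-! #### Metric basics -/

theorem gsymm (g : Lorentzian) (μ ν : Fin 4) (p : Pt) : g.gdown μ ν p = g.gdown ν μ p :=
  congrFun (g.symm_gdown μ ν) p

theorem gisymm (g : Lorentzian) (μ ν : Fin 4) (p : Pt) : g.ginv μ ν p = g.ginv ν μ p :=
  congrFun (g.symm_ginv μ ν) p

theorem pd_gdown_symm (g : Lorentzian) (i μ ν : Fin 4) :
    pd i (g.gdown μ ν) = pd i (g.gdown ν μ) := by
  rw [g.symm_gdown]

theorem dgdown (g : Lorentzian) (μ ν : Fin 4) : Differentiable ℝ (g.gdown μ ν) :=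
  (g.smooth_gdown μ ν).diff

theorem dginv (g : Lorentzian) (μ ν : Fin 4) : Differentiable ℝ (g.ginv μ ν) :=
  (g.smooth_ginv μ ν).diff

theorem dvol (g : Lorentzian) : Differentiable ℝ g.vol :=
  g.smooth_vol.diff

theorem diffM (g : Lorentzian) (μ : Fin 4) : Differentiable ℝ (Mvec g μ) := by
  have h : Mvec g μ = fun p => g.ginv μ 2 p * g.ginv 2 3 p - g.ginv 2 2 p * g.ginv μ 3 p := rfl
  rw [h]
  exact ((dginv g μ 2).mul (dginv g 2 3)).sub ((dginv g 2 2).mul (dginv g μ 3))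

theorem inv₂ (g : Lorentzian) (μ ν : Fin 4) (p : Pt) :
    (∑ ρ, g.gdown μ ρ p * g.ginv ρ ν p) = if μ = ν then 1 else 0 := by
  have h : (∑ ρ, g.gdown μ ρ p * g.ginv ρ ν p) = ∑ ρ, g.ginv ν ρ p * g.gdown ρ μ p := by
    refine Finset.sum_congr rfl fun ρ _ => ?_
    rw [gsymm g μ ρ p, gisymm g ρ ν p]
    ring
  rw [h, g.inv_gdown ν μ p]
  rcases eq_or_ne μ ν with hh | hh
  · simp [hh]
  · rw [if_neg (Ne.symm hh), if_neg hh]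

theorem flat_apply (g : Lorentzian) (v : Vec) (μ : Fin 4) (p : Pt) :
    g.flat v μ p = ∑ ν, g.gdown μ ν p * v ν p := by
  simp [Lorentzian.flat]

theorem inner_apply (g : Lorentzian) (v w : Vec) (p : Pt) :
    g.inner v w p = ∑ μ, ∑ ν, g.gdown μ ν p * v μ p * w ν p := by
  simp [Lorentzian.inner]

theorem inner_symm (g : Lorentzian) (v w : Vec) : g.inner v w = g.inner w v := by
  funext p
  rw [inner_apply, inner_apply, Finset.sum_comm]
  refine Finset.sum_congr rfl fun μ _ => Finset.sum_congr rfl fun ν _ => ?_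
  rw [gsymm g ν μ p]
  ring

theorem christoffel_apply (g : Lorentzian) (μ ν ρ : Fin 4) (p : Pt) :
    g.christoffel μ ν ρ p = ∑ τ, g.ginv μ τ p *
      ((1/2) * (pd ν (g.gdown τ ρ) p + pd ρ (g.gdown τ ν) p - pd τ (g.gdown ν ρ) p)) := by
  unfold Lorentzian.christoffel
  rw [Finset.mul_sum]
  exact Finset.sum_congr rfl fun τ _ => by ring

theorem christoffel_symm (g : Lorentzian) (μ ν ρ : Fin 4) (p : Pt) :
    g.christoffel μ ν ρ p = g.christoffel μ ρ ν p := by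
  rw [christoffel_apply, christoffel_apply]
  refine Finset.sum_congr rfl fun τ _ => ?_
  rw [show pd τ (g.gdown ν ρ) = pd τ (g.gdown ρ ν) from pd_gdown_symm g τ ν ρ]
  ring

/-- The lowered Christoffel symbol. -/
def lo (g : Lorentzian) (σ μ ν : Fin 4) : Sc := fun p =>
  (1/2) * (pd μ (g.gdown σ ν) p + pd ν (g.gdown σ μ) p - pd σ (g.gdown μ ν) p)

theorem loweredGamma (g : Lorentzian) (σ μ ν : Fin 4) (p : Pt) :
    (∑ ρ, g.gdown σ ρ p * g.christoffel ρ μ ν p) = lo g σ μ ν p := by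
  have h1 : (∑ ρ, g.gdown σ ρ p * g.christoffel ρ μ ν p)
      = ∑ ρ, ∑ τ, (g.gdown σ ρ p * g.ginv ρ τ p) *
          ((1/2) * (pd μ (g.gdown τ ν) p + pd ν (g.gdown τ μ) p - pd τ (g.gdown μ ν) p)) :=
    Finset.sum_congr rfl fun ρ _ => by
      rw [christoffel_apply, Finset.mul_sum]
      exact Finset.sum_congr rfl fun τ _ => by ring
  rw [h1, Finset.sum_comm]
  have h2 : ∀ τ : Fin 4, (∑ ρ : Fin 4, (g.gdown σ ρ p * g.ginv ρ τ p) *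
        ((1/2) * (pd μ (g.gdown τ ν) p + pd ν (g.gdown τ μ) p - pd τ (g.gdown μ ν) p)))
      = (if σ = τ then 1 else 0) *
          ((1/2) * (pd μ (g.gdown τ ν) p + pd ν (g.gdown τ μ) p - pd τ (g.gdown μ ν) p)) := by
    intro τ
    rw [← Finset.sum_mul, inv₂]
  rw [Finset.sum_congr rfl fun τ _ => h2 τ]
  simp [lo]

theorem loSum (g : Lorentzian) (σ ρ μ : Fin 4) (p : Pt) :
    lo g σ μ ρ p + lo g ρ μ σ p = pd μ (g.gdown σ ρ) p := by
  unfold lo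
  rw [show pd μ (g.gdown ρ σ) = pd μ (g.gdown σ ρ) from pd_gdown_symm g μ ρ σ,
      show pd σ (g.gdown ρ μ) = pd σ (g.gdown μ ρ) from pd_gdown_symm g σ ρ μ,
      show pd ρ (g.gdown μ σ) = pd ρ (g.gdown σ μ) from pd_gdown_symm g ρ μ σ]
  ring

/-! #### Covariant derivative machinery -/

/-- `∇_μ w`, as a vector field. -/
def cd (g : Lorentzian) (μ : Fin 4) (w : Vec) (σ : Fin 4) : Sc := fun p =>
  pd μ (w σ) p + ∑ ρ, g.christoffel σ μ ρ p * w ρ p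

/-- `g(∇_μ v, w)`. -/
def Pf (g : Lorentzian) (v w : Vec) (μ : Fin 4) : Sc := fun p =>
  ∑ ν, g.flat w ν p * cd g μ v ν p

theorem Pf_eq (g : Lorentzian) (v w : Vec) (μ : Fin 4) (p : Pt) :
    Pf g v w μ p = (∑ ν, ∑ σ, g.gdown ν σ p * w σ p * pd μ (v ν) p)
      + ∑ ρ, ∑ σ, lo g σ μ ρ p * v ρ p * w σ p := by
  have hB : ∀ ρ : Fin 4, (∑ ν, g.flat w ν p * (g.christoffel ν μ ρ p * v ρ p))
      = ∑ σ, lo g σ μ ρ p * v ρ p * w σ p := by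
    intro ρ
    have e1 : ∀ ν : Fin 4, g.flat w ν p * (g.christoffel ν μ ρ p * v ρ p)
        = ∑ σ, (g.gdown σ ν p * g.christoffel ν μ ρ p) * (w σ p * v ρ p) := by
      intro ν
      rw [flat_apply, Finset.sum_mul]
      exact Finset.sum_congr rfl fun σ _ => by rw [gsymm g ν σ p]; ring
    rw [Finset.sum_congr rfl fun ν _ => e1 ν, Finset.sum_comm]
    refine Finset.sum_congr rfl fun σ _ => ?_
    rw [← Finset.sum_mul, loweredGamma]
    ring
  have h0 : Pf g v w μ p = (∑ ν, g.flat w ν p * pd μ (v ν) p)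
      + ∑ ν, ∑ ρ, g.flat w ν p * (g.christoffel ν μ ρ p * v ρ p) := by
    unfold Pf cd
    rw [← Finset.sum_add_distrib]
    refine Finset.sum_congr rfl fun ν _ => ?_
    rw [mul_add, Finset.mul_sum]
  rw [h0]
  congr 1
  · refine Finset.sum_congr rfl fun ν _ => ?_
    rw [flat_apply, Finset.sum_mul]
  · rw [Finset.sum_comm]
    exact Finset.sum_congr rfl fun ρ _ => hB ρ

theorem pairDer (g : Lorentzian) {v w : Vec} (hv : ∀ μ, Differentiable ℝ (v μ))
    (hw : ∀ μ, Differentiable ℝ (w μ)) (μ₀ : Fin 4) (p : Pt) :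
    pd μ₀ (g.inner v w) p = Pf g v w μ₀ p + Pf g w v μ₀ p := by
  have hiw : g.inner v w = fun q => ∑ μ, ∑ ν, g.gdown μ ν q * v μ q * w ν q :=
    funext fun q => inner_apply g v w q
  rw [hiw]
  have h1 : pd μ₀ (fun q => ∑ μ, ∑ ν, g.gdown μ ν q * v μ q * w ν q) p
      = ∑ μ, ∑ ν, (pd μ₀ (g.gdown μ ν) p * v μ p * w ν p
          + g.gdown μ ν p * pd μ₀ (v μ) p * w ν p
          + g.gdown μ ν p * v μ p * pd μ₀ (w ν) p) := by
    rw [pd_sum' Finset.univ (fun μ q => ∑ ν, g.gdown μ ν q * v μ q * w ν q)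
      (fun μ _ => Differentiable.fun_sum fun ν _ => ((dgdown g μ ν).mul (hv μ)).mul (hw ν)) μ₀ p]
    refine Finset.sum_congr rfl fun μ _ => ?_
    rw [pd_sum' Finset.univ (fun ν q => g.gdown μ ν q * v μ q * w ν q) (fun ν _ => ((dgdown g μ ν).mul (hv μ)).mul (hw ν)) μ₀ p]
    exact Finset.sum_congr rfl fun ν _ => pd_mul3' (dgdown g μ ν) (hv μ) (hw ν) μ₀ p
  rw [h1, Pf_eq g v w μ₀ p, Pf_eq g w v μ₀ p]
  have split : ∀ (F G H : Fin 4 → Fin 4 → ℝ),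
      (∑ μ, ∑ ν, (F μ ν + G μ ν + H μ ν))
        = (∑ μ, ∑ ν, F μ ν) + (∑ μ, ∑ ν, G μ ν) + (∑ μ, ∑ ν, H μ ν) := by
    intro F G H
    rw [← Finset.sum_add_distrib, ← Finset.sum_add_distrib]
    exact Finset.sum_congr rfl fun μ _ => by
      rw [← Finset.sum_add_distrib, ← Finset.sum_add_distrib]
  rw [split]
  have e2 : (∑ μ, ∑ ν, g.gdown μ ν p * pd μ₀ (v μ) p * w ν p)
      = ∑ ν, ∑ σ, g.gdown ν σ p * w σ p * pd μ₀ (v ν) p :=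
    Finset.sum_congr rfl fun μ _ => Finset.sum_congr rfl fun ν _ => by ring
  have e3 : (∑ μ, ∑ ν, g.gdown μ ν p * v μ p * pd μ₀ (w ν) p)
      = ∑ ν, ∑ σ, g.gdown ν σ p * v σ p * pd μ₀ (w ν) p := by
    rw [Finset.sum_comm]
    exact Finset.sum_congr rfl fun ν _ => Finset.sum_congr rfl fun μ _ => by
      rw [gsymm g μ ν p] <;> ring
  have e1 : (∑ μ, ∑ ν, pd μ₀ (g.gdown μ ν) p * v μ p * w ν p)
      = (∑ ρ, ∑ σ, lo g σ μ₀ ρ p * v ρ p * w σ p)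
        + ∑ ρ, ∑ σ, lo g σ μ₀ ρ p * w ρ p * v σ p := by
    have swap2 : (∑ ρ : Fin 4, ∑ σ : Fin 4, lo g σ μ₀ ρ p * w ρ p * v σ p)
        = ∑ ρ : Fin 4, ∑ σ : Fin 4, lo g ρ μ₀ σ p * w σ p * v ρ p := Finset.sum_comm
    rw [swap2, ← Finset.sum_add_distrib]
    refine Finset.sum_congr rfl fun ρ _ => ?_
    rw [← Finset.sum_add_distrib]
    refine Finset.sum_congr rfl fun σ _ => ?_
    rw [show pd μ₀ (g.gdown ρ σ) = pd μ₀ (g.gdown σ ρ) from pd_gdown_symm g μ₀ ρ σ,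
        ← loSum g σ ρ μ₀ p]
    ring
  rw [e1, e2, e3]
  ring

theorem lowComm (g : Lorentzian) {w : Vec} (hw : ∀ μ, Differentiable ℝ (w μ))
    (μ ν : Fin 4) (p : Pt) :
    pd μ (g.flat w ν) p = (∑ ρ, g.christoffel ρ μ ν p * g.flat w ρ p)
      + ∑ σ, g.gdown ν σ p * cd g μ w σ p := by
  have hL : pd μ (g.flat w ν) p
      = ∑ σ, (w σ p * pd μ (g.gdown ν σ) p + g.gdown ν σ p * pd μ (w σ) p) := by
    have hfw : g.flat w ν = fun q => ∑ σ, g.gdown ν σ q * w σ q :=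
      funext fun q => flat_apply g w ν q
    rw [hfw, pd_sum' Finset.univ (fun σ q => g.gdown ν σ q * w σ q) (fun σ _ => (dgdown g ν σ).mul (hw σ)) μ p]
    exact Finset.sum_congr rfl fun σ _ => by
      rw [pd_mul' (dgdown g ν σ) (hw σ) μ p]; ring
  have hR1 : (∑ ρ, g.christoffel ρ μ ν p * g.flat w ρ p) = ∑ τ, lo g τ μ ν p * w τ p := by
    have e : ∀ ρ : Fin 4, g.christoffel ρ μ ν p * g.flat w ρ p
        = ∑ τ, (g.gdown τ ρ p * g.christoffel ρ μ ν p) * w τ p := by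
      intro ρ
      rw [flat_apply, Finset.mul_sum]
      exact Finset.sum_congr rfl fun τ _ => by rw [gsymm g ρ τ p]; ring
    rw [Finset.sum_congr rfl fun ρ _ => e ρ, Finset.sum_comm]
    exact Finset.sum_congr rfl fun τ _ => by rw [← Finset.sum_mul, loweredGamma]
  have hR2 : (∑ σ, g.gdown ν σ p * cd g μ w σ p)
      = (∑ σ, g.gdown ν σ p * pd μ (w σ) p) + ∑ ρ, lo g ν μ ρ p * w ρ p := by
    have e : ∀ σ : Fin 4, g.gdown ν σ p * cd g μ w σ p
        = g.gdown ν σ p * pd μ (w σ) p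
          + ∑ ρ, (g.gdown ν σ p * g.christoffel σ μ ρ p) * w ρ p := by
      intro σ
      unfold cd
      rw [mul_add, Finset.mul_sum]
      exact congrArg _ (Finset.sum_congr rfl fun ρ _ => by ring)
    rw [Finset.sum_congr rfl fun σ _ => e σ, Finset.sum_add_distrib]
    congr 1
    rw [Finset.sum_comm]
    exact Finset.sum_congr rfl fun ρ _ => by rw [← Finset.sum_mul, loweredGamma]
  rw [hL, hR1, hR2, Finset.sum_add_distrib]
  have hfin : (∑ τ, lo g τ μ ν p * w τ p)
      + ((∑ σ, g.gdown ν σ p * pd μ (w σ) p) + ∑ ρ, lo g ν μ ρ p * w ρ p)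
      = (∑ τ, (lo g τ μ ν p + lo g ν μ τ p) * w τ p)
        + ∑ σ, g.gdown ν σ p * pd μ (w σ) p := by
    rw [Finset.sum_congr rfl fun τ (_ : τ ∈ Finset.univ) =>
      (add_mul (lo g τ μ ν p) (lo g ν μ τ p) (w τ p)), Finset.sum_add_distrib]
    ring
  rw [hfin]
  congr 1
  refine Finset.sum_congr rfl fun τ _ => ?_
  rw [loSum g τ ν μ p, show pd μ (g.gdown τ ν) = pd μ (g.gdown ν τ) from pd_gdown_symm g μ τ ν]
  ring

theorem dOne_apply (ω : Cov) (v w : Vec) (p : Pt) :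
    dOne ω v w p = ∑ μ, ∑ ν, (pd μ (ω ν) p - pd ν (ω μ) p) * v μ p * w ν p := by
  simp [dOne]

theorem dOne_eq (g : Lorentzian) {w : Vec} (hw : ∀ μ, Differentiable ℝ (w μ))
    (v u : Vec) (p : Pt) :
    dOne (g.flat w) v u p
      = (∑ μ, v μ p * Pf g w u μ p) - ∑ μ, u μ p * Pf g w v μ p := by
  rw [dOne_apply]
  have key : ∀ μ ν : Fin 4, (pd μ (g.flat w ν) p - pd ν (g.flat w μ) p) * v μ p * u ν p
      = (∑ σ, g.gdown ν σ p * cd g μ w σ p) * v μ p * u ν p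
        - (∑ σ, g.gdown μ σ p * cd g ν w σ p) * v μ p * u ν p := by
    intro μ ν
    rw [lowComm g hw μ ν p, lowComm g hw ν μ p]
    have hc : (∑ ρ, g.christoffel ρ μ ν p * g.flat w ρ p)
        = ∑ ρ, g.christoffel ρ ν μ p * g.flat w ρ p :=
      Finset.sum_congr rfl fun ρ _ => by rw [christoffel_symm g ρ μ ν p]
    rw [hc]
    ring
  rw [Finset.sum_congr rfl fun μ _ => Finset.sum_congr rfl fun ν _ => key μ ν]
  rw [Finset.sum_congr rfl fun μ (_ : μ ∈ Finset.univ) =>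
    (Finset.sum_sub_distrib (s := Finset.univ) _ _), Finset.sum_sub_distrib]
  congr 1
  · refine Finset.sum_congr rfl fun μ _ => ?_
    have e : ∀ ν : Fin 4, (∑ σ, g.gdown ν σ p * cd g μ w σ p) * v μ p * u ν p
        = ∑ σ, (g.gdown ν σ p * u ν p) * (cd g μ w σ p * v μ p) := by
      intro ν
      rw [Finset.sum_mul, Finset.sum_mul]
      exact Finset.sum_congr rfl fun σ _ => by ring
    rw [Finset.sum_congr rfl fun ν _ => e ν, Finset.sum_comm]
    unfold Pf
    rw [Finset.mul_sum]
    refine Finset.sum_congr rfl fun σ _ => ?_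
    rw [← Finset.sum_mul, flat_apply,
      Finset.sum_congr rfl fun ν (_ : ν ∈ Finset.univ) =>
        (by rw [gsymm g ν σ p] : g.gdown ν σ p * u ν p = g.gdown σ ν p * u ν p)]
    ring
  · -- here the roles of μ and ν: second sum
    have e : ∀ μ ν : Fin 4, (∑ σ, g.gdown μ σ p * cd g ν w σ p) * v μ p * u ν p
        = ∑ σ, (g.gdown μ σ p * v μ p) * (cd g ν w σ p * u ν p) := by
      intro μ ν
      rw [Finset.sum_mul, Finset.sum_mul]
      exact Finset.sum_congr rfl fun σ _ => by ring
    rw [Finset.sum_congr rfl fun μ _ => Finset.sum_congr rfl fun ν _ => e μ ν,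
      Finset.sum_comm]
    refine Finset.sum_congr rfl fun ν _ => ?_
    rw [Finset.sum_comm]
    unfold Pf
    rw [Finset.mul_sum]
    refine Finset.sum_congr rfl fun σ _ => ?_
    rw [← Finset.sum_mul, flat_apply,
      Finset.sum_congr rfl fun μ (_ : μ ∈ Finset.univ) =>
        (by rw [gsymm g μ σ p] : g.gdown μ σ p * v μ p = g.gdown σ μ p * v μ p)]
    ring

/-! #### Jacobi's formula and the divergence -/

/-- `det g` as a scalar field. -/
def detG (g : Lorentzian) : Sc := fun q => Matrix.det (Matrix.of fun μ ν => g.gdown μ ν q)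

theorem jacobi (g : Lorentzian) (ρ : Fin 4) (p : Pt) :
    pd ρ g.vol p = (1/2) * g.vol p * ∑ α, ∑ β, g.ginv α β p * pd ρ (g.gdown α β) p := by
  classical
  have hdexp : detG g = fun q => ∑ σ : Equiv.Perm (Fin 4),
      ((Equiv.Perm.sign σ : ℤ) : ℝ) * ∏ k, g.gdown (σ k) k q := by
    funext q
    simp [detG, Matrix.det_apply, Units.smul_def, zsmul_eq_mul]
  have hpd1 : pd ρ (detG g) p = ∑ σ : Equiv.Perm (Fin 4), ((Equiv.Perm.sign σ : ℤ) : ℝ)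
      * ∑ k, pd ρ (g.gdown (σ k) k) p * ∏ j ∈ Finset.univ.erase k, g.gdown (σ j) j p := by
    rw [hdexp, pd_sum' Finset.univ _
      (fun σ _ => (diff_prod Finset.univ _ (fun k => dgdown g (σ k) k)).const_mul _) ρ p]
    refine Finset.sum_congr rfl fun σ _ => ?_
    rw [pd_const_mul' (diff_prod Finset.univ _ (fun k => dgdown g (σ k) k)) _ ρ p,
        pd_prod' Finset.univ _ (fun k => dgdown g (σ k) k) ρ p]
  have hpd2 : pd ρ (detG g) p = ∑ μ : Fin 4,
      ((Matrix.of fun μ' ν => g.gdown μ' ν p).updateRow μ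
        (fun ν => pd ρ (g.gdown μ ν) p)).det := by
    have hrhs : ∀ μ : Fin 4, ((Matrix.of fun μ' ν => g.gdown μ' ν p).updateRow μ
          (fun ν => pd ρ (g.gdown μ ν) p)).det
        = ∑ σ : Equiv.Perm (Fin 4), ((Equiv.Perm.sign σ : ℤ) : ℝ)
            * ∏ k, (if σ k = μ then pd ρ (g.gdown μ k) p else g.gdown (σ k) k p) := by
      intro μ
      rw [Matrix.det_apply]
      refine Finset.sum_congr rfl fun σ _ => ?_
      rw [Units.smul_def, zsmul_eq_mul]
      congr 1
      refine Finset.prod_congr rfl fun k _ => ?_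
      rw [Matrix.updateRow_apply]
      rcases eq_or_ne (σ k) μ with h | h
      · rw [if_pos h, if_pos h]
      · rw [if_neg h, if_neg h]
        simp [Matrix.of_apply]
    calc pd ρ (detG g) p
        = ∑ σ : Equiv.Perm (Fin 4), ((Equiv.Perm.sign σ : ℤ) : ℝ)
            * ∑ k, pd ρ (g.gdown (σ k) k) p
                * ∏ j ∈ Finset.univ.erase k, g.gdown (σ j) j p := hpd1
      _ = ∑ σ : Equiv.Perm (Fin 4), ∑ k : Fin 4, ((Equiv.Perm.sign σ : ℤ) : ℝ)
            * ∏ i, (if σ i = σ k then pd ρ (g.gdown (σ k) i) p else g.gdown (σ i) i p) := by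
          refine Finset.sum_congr rfl fun σ _ => ?_
          rw [Finset.mul_sum]
          refine Finset.sum_congr rfl fun k _ => ?_
          congr 1
          rw [← Finset.mul_prod_erase Finset.univ _ (Finset.mem_univ k), if_pos rfl]
          congr 1
          refine Finset.prod_congr rfl fun j hj => ?_
          rw [if_neg (fun h => (Finset.ne_of_mem_erase hj) (σ.injective h))]
      _ = ∑ σ : Equiv.Perm (Fin 4), ∑ μ : Fin 4, ((Equiv.Perm.sign σ : ℤ) : ℝ)
            * ∏ i, (if σ i = μ then pd ρ (g.gdown μ i) p else g.gdown (σ i) i p) := by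
          refine Finset.sum_congr rfl fun σ _ => ?_
          exact Equiv.sum_comp σ (fun μ => ((Equiv.Perm.sign σ : ℤ) : ℝ)
            * ∏ i, (if σ i = μ then pd ρ (g.gdown μ i) p else g.gdown (σ i) i p))
      _ = ∑ μ : Fin 4, ∑ σ : Equiv.Perm (Fin 4), ((Equiv.Perm.sign σ : ℤ) : ℝ)
            * ∏ i, (if σ i = μ then pd ρ (g.gdown μ i) p else g.gdown (σ i) i p) :=
          Finset.sum_comm
      _ = ∑ μ : Fin 4, ((Matrix.of fun μ' ν => g.gdown μ' ν p).updateRow μ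
            (fun ν => pd ρ (g.gdown μ ν) p)).det :=
          Finset.sum_congr rfl fun μ _ => (hrhs μ).symm
  have hBA : ∀ (r : Fin 4 → ℝ) (μ : Fin 4),
      ((Matrix.of fun μ' ν => g.gdown μ' ν p).updateRow μ r).det
        = (∑ k, r k * g.ginv k μ p) * detG g p := by
    intro r μ
    have hr : r = ∑ j : Fin 4, (∑ k, r k * g.ginv k j p) •
        (Matrix.of fun μ' ν => g.gdown μ' ν p) j := by
      funext ν
      rw [Finset.sum_apply]
      simp only [Pi.smul_apply, smul_eq_mul]
      have e : ∀ j : Fin 4, (∑ k, r k * g.ginv k j p) *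
            (Matrix.of fun μ' ν' => g.gdown μ' ν' p) j ν
          = ∑ k, r k * (g.ginv k j p * g.gdown j ν p) := by
        intro j
        rw [Finset.sum_mul]
        refine Finset.sum_congr rfl fun k _ => ?_
        simp only [Matrix.of_apply]
        ring
      rw [Finset.sum_congr rfl fun j _ => e j, Finset.sum_comm]
      have e2 : ∀ k : Fin 4, (∑ j, r k * (g.ginv k j p * g.gdown j ν p))
          = r k * (if k = ν then 1 else 0) := by
        intro k
        rw [← Finset.mul_sum, g.inv_gdown k ν p]
      rw [Finset.sum_congr rfl fun k _ => e2 k]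
      simp
    calc ((Matrix.of fun μ' ν => g.gdown μ' ν p).updateRow μ r).det
        = ((Matrix.of fun μ' ν => g.gdown μ' ν p).updateRow μ
            (∑ j : Fin 4, (∑ k, r k * g.ginv k j p) •
              (Matrix.of fun μ' ν => g.gdown μ' ν p) j)).det := by rw [← hr]
      _ = (∑ k, r k * g.ginv k μ p) • (Matrix.of fun μ' ν => g.gdown μ' ν p).det :=
          Matrix.det_updateRow_sum _ μ _
      _ = (∑ k, r k * g.ginv k μ p) * detG g p := by rw [smul_eq_mul]; rfl
  have hpd3 : pd ρ (detG g) p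
      = detG g p * ∑ α, ∑ β, g.ginv α β p * pd ρ (g.gdown α β) p := by
    rw [hpd2, Finset.sum_congr rfl fun μ (_ : μ ∈ Finset.univ) =>
      hBA (fun ν => pd ρ (g.gdown μ ν) p) μ, ← Finset.sum_mul]
    rw [show (∑ μ : Fin 4, ∑ k : Fin 4, pd ρ (g.gdown μ k) p * g.ginv k μ p)
        = ∑ α, ∑ β, g.ginv α β p * pd ρ (g.gdown α β) p from
      Finset.sum_congr rfl fun μ _ => Finset.sum_congr rfl fun k _ => by
        rw [gisymm g k μ p]; ring]
    ring
  -- relate to vol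
  have hvol2 : (fun q => g.vol q * g.vol q) = fun q => -detG g q := by
    funext q
    have h := g.vol_sq q
    rw [pow_two] at h
    exact h
  have h1 : pd ρ (fun q => g.vol q * g.vol q) p = pd ρ (fun q => -detG g q) p := by
    rw [hvol2]
  rw [pd_mul' (dvol g) (dvol g) ρ p, pd_neg' (detG g) ρ p, hpd3] at h1
  have hdet_eq : detG g p = -(g.vol p * g.vol p) := by
    have h := congrFun hvol2 p
    linarith
  rw [hdet_eq] at h1
  have hVne : g.vol p ≠ 0 := (g.vol_pos p).ne'
  have h2 : g.vol p * (2 * pd ρ g.vol p)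
      = g.vol p * (g.vol p * ∑ α, ∑ β, g.ginv α β p * pd ρ (g.gdown α β) p) := by
    linear_combination h1
  have h3 := mul_left_cancel₀ hVne h2
  linarith

theorem trGamma (g : Lorentzian) (ρ : Fin 4) (p : Pt) :
    (∑ μ, g.christoffel μ μ ρ p)
      = (1/2) * ∑ α, ∑ β, g.ginv α β p * pd ρ (g.gdown α β) p := by
  have e : ∀ μ : Fin 4, g.christoffel μ μ ρ p
      = ∑ τ, ((1/2) * (g.ginv μ τ p * pd μ (g.gdown τ ρ) p)
          + (1/2) * (g.ginv μ τ p * pd ρ (g.gdown τ μ) p)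
          - (1/2) * (g.ginv μ τ p * pd τ (g.gdown μ ρ) p)) := by
    intro μ
    rw [christoffel_apply]
    exact Finset.sum_congr rfl fun τ _ => by ring
  rw [Finset.sum_congr rfl fun μ _ => e μ]
  have split : ∀ (F G H : Fin 4 → Fin 4 → ℝ),
      (∑ μ, ∑ τ, (F μ τ + G μ τ - H μ τ))
        = (∑ μ, ∑ τ, F μ τ) + (∑ μ, ∑ τ, G μ τ) - (∑ μ, ∑ τ, H μ τ) := by
    intro F G H
    rw [← Finset.sum_add_distrib, ← Finset.sum_sub_distrib]
    exact Finset.sum_congr rfl fun μ _ => by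
      rw [← Finset.sum_add_distrib, ← Finset.sum_sub_distrib]
  rw [split]
  have hFH : (∑ μ : Fin 4, ∑ τ : Fin 4, (1/2) * (g.ginv μ τ p * pd μ (g.gdown τ ρ) p))
      = ∑ μ : Fin 4, ∑ τ : Fin 4, (1/2) * (g.ginv μ τ p * pd τ (g.gdown μ ρ) p) := by
    rw [Finset.sum_comm]
    exact Finset.sum_congr rfl fun x _ => Finset.sum_congr rfl fun y _ => by
      rw [gisymm g y x p]
  have hG : (∑ μ : Fin 4, ∑ τ : Fin 4, (1/2) * (g.ginv μ τ p * pd ρ (g.gdown τ μ) p))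
      = (1/2) * ∑ α, ∑ β, g.ginv α β p * pd ρ (g.gdown α β) p := by
    rw [Finset.mul_sum]
    refine Finset.sum_congr rfl fun α _ => ?_
    rw [Finset.mul_sum]
    refine Finset.sum_congr rfl fun β _ => ?_
    rw [show pd ρ (g.gdown β α) = pd ρ (g.gdown α β) from pd_gdown_symm g ρ β α]
  rw [hFH, hG]
  ring

theorem div_eq (g : Lorentzian) (p : Pt) :
    g.div (Mvec g) p = ∑ μ, cd g μ (Mvec g) μ p := by
  have h0 : g.div (Mvec g) p
      = (g.vol p)⁻¹ * ∑ μ, pd μ (fun q => g.vol q * Mvec g μ q) p := rfl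
  rw [h0]
  have e12 : ∀ μ : Fin 4, pd μ (fun q => g.vol q * Mvec g μ q) p
      = g.vol p * (pd μ (Mvec g μ) p
          + Mvec g μ p * ((1/2) * ∑ α, ∑ β, g.ginv α β p * pd μ (g.gdown α β) p)) := by
    intro μ
    rw [pd_mul' (dvol g) (diffM g μ) μ p, jacobi g μ p]
    ring
  rw [Finset.sum_congr rfl fun μ _ => e12 μ, ← Finset.mul_sum, ← mul_assoc,
      inv_mul_cancel₀ (g.vol_pos p).ne', one_mul]
  have hcd : ∀ μ : Fin 4, cd g μ (Mvec g) μ p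
      = pd μ (Mvec g μ) p + ∑ ρ', g.christoffel μ μ ρ' p * Mvec g ρ' p := fun μ => rfl
  rw [Finset.sum_congr rfl fun μ (_ : μ ∈ Finset.univ) => hcd μ,
      Finset.sum_add_distrib, Finset.sum_add_distrib]
  congr 1
  have hright : (∑ μ : Fin 4, ∑ ρ' : Fin 4, g.christoffel μ μ ρ' p * Mvec g ρ' p)
      = ∑ ρ' : Fin 4, Mvec g ρ' p
          * ((1/2) * ∑ α, ∑ β, g.ginv α β p * pd ρ' (g.gdown α β) p) := by
    rw [Finset.sum_comm]
    refine Finset.sum_congr rfl fun ρ' _ => ?_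
    rw [← Finset.sum_mul, trGamma g ρ' p]
    ring
  rw [hright]

/-! #### Frame completeness and the main identity -/

theorem completeness (g : Lorentzian) {s a n : Vec} (hf : Frame g s (Mvec g) a n)
    (p : Pt) (μ ν : Fin 4) :
    g.ginv μ ν p = s μ p * s ν p + a μ p * a ν p
      - n μ p * Mvec g ν p - Mvec g μ p * n ν p := by
  obtain ⟨c, hc⟩ := hf.spans p (fun ρ => g.ginv ρ μ p)
  have key : ∀ w : Vec, (∑ ρ, ∑ σ, g.gdown ρ σ p * g.ginv ρ μ p * w σ p) = w μ p := by
    intro w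
    rw [Finset.sum_comm]
    have e : ∀ σ : Fin 4, (∑ ρ, g.gdown ρ σ p * g.ginv ρ μ p * w σ p)
        = (if μ = σ then 1 else 0) * w σ p := by
      intro σ
      rw [← Finset.sum_mul]
      congr 1
      rw [show (∑ ρ, g.gdown ρ σ p * g.ginv ρ μ p) = ∑ ρ, g.ginv μ ρ p * g.gdown ρ σ p from
        Finset.sum_congr rfl fun ρ _ => by rw [gisymm g ρ μ p]; ring]
      exact g.inv_gdown μ σ p
    rw [Finset.sum_congr rfl fun σ _ => e σ]
    simp
  have expand : ∀ w : Vec, (∑ ρ, ∑ σ, g.gdown ρ σ p * g.ginv ρ μ p * w σ p)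
      = c 0 * g.inner s w p + c 1 * g.inner (Mvec g) w p + c 2 * g.inner a w p
        + c 3 * g.inner n w p := by
    intro w
    rw [inner_apply, inner_apply, inner_apply, inner_apply,
        Finset.mul_sum, Finset.mul_sum, Finset.mul_sum, Finset.mul_sum,
        ← Finset.sum_add_distrib, ← Finset.sum_add_distrib, ← Finset.sum_add_distrib]
    refine Finset.sum_congr rfl fun ρ _ => ?_
    rw [Finset.mul_sum, Finset.mul_sum, Finset.mul_sum, Finset.mul_sum,
        ← Finset.sum_add_distrib, ← Finset.sum_add_distrib, ← Finset.sum_add_distrib]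
    refine Finset.sum_congr rfl fun σ _ => ?_
    rw [hc ρ]
    ring
  -- pointwise frame inner products
  have vss : g.inner s s p = 1 := by simpa using congrFun hf.s_unit p
  have vMs : g.inner (Mvec g) s p = 0 := by simpa using congrFun hf.l_s p
  have vas : g.inner a s p = 0 := by
    simpa using congrFun ((inner_symm g a s).trans hf.s_a) p
  have vns : g.inner n s p = 0 := by simpa using congrFun hf.n_s p
  have vsM : g.inner s (Mvec g) p = 0 := by
    simpa using congrFun ((inner_symm g s (Mvec g)).trans hf.l_s) p
  have vMM : g.inner (Mvec g) (Mvec g) p = 0 := by simpa using congrFun hf.l_null p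
  have vaM : g.inner a (Mvec g) p = 0 := by
    simpa using congrFun ((inner_symm g a (Mvec g)).trans hf.l_a) p
  have vnM : g.inner n (Mvec g) p = -1 := by simpa using congrFun hf.n_l p
  have vsa : g.inner s a p = 0 := by simpa using congrFun hf.s_a p
  have vMa : g.inner (Mvec g) a p = 0 := by simpa using congrFun hf.l_a p
  have vaa : g.inner a a p = 1 := by simpa using congrFun hf.a_unit p
  have vna : g.inner n a p = 0 := by simpa using congrFun hf.n_a p
  have vsn : g.inner s n p = 0 := by
    simpa using congrFun ((inner_symm g s n).trans hf.n_s) p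
  have vMn : g.inner (Mvec g) n p = -1 := by
    simpa using congrFun ((inner_symm g (Mvec g) n).trans hf.n_l) p
  have van : g.inner a n p = 0 := by
    simpa using congrFun ((inner_symm g a n).trans hf.n_a) p
  have vnn : g.inner n n p = 0 := by simpa using congrFun hf.n_null p
  have Es := (key s).symm.trans (expand s)
  rw [vss, vMs, vas, vns] at Es
  have EM := (key (Mvec g)).symm.trans (expand (Mvec g))
  rw [vsM, vMM, vaM, vnM] at EM
  have Ea := (key a).symm.trans (expand a)
  rw [vsa, vMa, vaa, vna] at Ea
  have En := (key n).symm.trans (expand n)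
  rw [vsn, vMn, van, vnn] at En
  have h0 : c 0 = s μ p := by linarith
  have h2 : c 2 = a μ p := by linarith
  have h1 : c 1 = -n μ p := by linarith
  have h3 : c 3 = -(Mvec g μ p) := by linarith
  rw [gisymm g μ ν p, hc ν, h0, h1, h2, h3]
  ring

theorem div_frame (g : Lorentzian) {s a n : Vec} (hf : Frame g s (Mvec g) a n) (p : Pt) :
    (∑ μ, cd g μ (Mvec g) μ p)
      = ∑ μ, (s μ p * Pf g (Mvec g) s μ p + a μ p * Pf g (Mvec g) a μ p
          - n μ p * Pf g (Mvec g) (Mvec g) μ p - Mvec g μ p * Pf g (Mvec g) n μ p) := by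
  have hQ : ∀ (w : Vec) (μ : Fin 4), Pf g (Mvec g) w μ p
      = ∑ σ, w σ p * (∑ ν, g.gdown σ ν p * cd g μ (Mvec g) ν p) := by
    intro w μ
    unfold Pf
    have e : ∀ ν : Fin 4, g.flat w ν p * cd g μ (Mvec g) ν p
        = ∑ σ, w σ p * (g.gdown σ ν p * cd g μ (Mvec g) ν p) := by
      intro ν
      rw [flat_apply, Finset.sum_mul]
      exact Finset.sum_congr rfl fun σ _ => by rw [gsymm g ν σ p]; ring
    rw [Finset.sum_congr rfl fun ν _ => e ν, Finset.sum_comm]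
    exact Finset.sum_congr rfl fun σ _ => by rw [Finset.mul_sum]
  have st1 : (∑ μ, cd g μ (Mvec g) μ p)
      = ∑ μ, ∑ ν, (if μ = ν then (1:ℝ) else 0) * cd g μ (Mvec g) ν p := by
    refine Finset.sum_congr rfl fun μ _ => ?_
    simp
  have chain : ∀ μ : Fin 4, (∑ ν, (if μ = ν then (1:ℝ) else 0) * cd g μ (Mvec g) ν p)
      = s μ p * Pf g (Mvec g) s μ p + a μ p * Pf g (Mvec g) a μ p
        - n μ p * Pf g (Mvec g) (Mvec g) μ p - Mvec g μ p * Pf g (Mvec g) n μ p := by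
    intro μ
    have c1 : (∑ ν, (if μ = ν then (1:ℝ) else 0) * cd g μ (Mvec g) ν p)
        = ∑ ν, ∑ σ, g.ginv μ σ p * (g.gdown σ ν p * cd g μ (Mvec g) ν p) := by
      refine Finset.sum_congr rfl fun ν _ => ?_
      rw [← g.inv_gdown μ ν p, Finset.sum_mul]
      exact Finset.sum_congr rfl fun σ _ => by ring
    rw [c1, Finset.sum_comm]
    rw [Finset.sum_congr rfl fun σ (_ : σ ∈ Finset.univ) =>
      (Finset.mul_sum Finset.univ (fun ν => g.gdown σ ν p * cd g μ (Mvec g) ν p)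
        (g.ginv μ σ p)).symm]
    rw [hQ s μ, hQ a μ, hQ (Mvec g) μ, hQ n μ,
        Finset.mul_sum, Finset.mul_sum, Finset.mul_sum, Finset.mul_sum,
        ← Finset.sum_add_distrib, ← Finset.sum_sub_distrib, ← Finset.sum_sub_distrib]
    refine Finset.sum_congr rfl fun σ _ => ?_
    rw [completeness g hf p μ σ]
    ring
  exact st1.trans (Finset.sum_congr rfl fun μ _ => chain μ)

theorem key_identity (g : Lorentzian) {s a n : Vec} (hf : Frame g s (Mvec g) a n) :
    g.div (Mvec g)
      = dOne (g.flat (Mvec g)) n (Mvec g) + dOne (g.flat a) (Mvec g) a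
        + dOne (g.flat s) (Mvec g) s := by
  funext p
  have hM : ∀ μ, Differentiable ℝ (Mvec g μ) := fun μ => diffM g μ
  have hsd : ∀ μ, Differentiable ℝ (s μ) := fun μ => (hf.smooth_s μ).diff
  have had : ∀ μ, Differentiable ℝ (a μ) := fun μ => (hf.smooth_a μ).diff
  have PMM : ∀ μ, Pf g (Mvec g) (Mvec g) μ p = 0 := by
    intro μ
    have h := pairDer g hM hM μ p
    rw [hf.l_null, pd_zero' μ p] at h
    linarith
  have Paa : ∀ μ, Pf g a a μ p = 0 := by
    intro μ
    have h := pairDer g had had μ p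
    rw [hf.a_unit, pd_one' μ p] at h
    linarith
  have Pss : ∀ μ, Pf g s s μ p = 0 := by
    intro μ
    have h := pairDer g hsd hsd μ p
    rw [hf.s_unit, pd_one' μ p] at h
    linarith
  have PaM : ∀ μ, Pf g a (Mvec g) μ p = -Pf g (Mvec g) a μ p := by
    intro μ
    have h := pairDer g had hM μ p
    rw [(inner_symm g a (Mvec g)).trans hf.l_a, pd_zero' μ p] at h
    linarith
  have PsM : ∀ μ, Pf g s (Mvec g) μ p = -Pf g (Mvec g) s μ p := by
    intro μ
    have h := pairDer g hsd hM μ p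
    rw [(inner_symm g s (Mvec g)).trans hf.l_s, pd_zero' μ p] at h
    linarith
  have hRexp : (dOne (g.flat (Mvec g)) n (Mvec g) + dOne (g.flat a) (Mvec g) a
      + dOne (g.flat s) (Mvec g) s) p
      = ((∑ μ, n μ p * Pf g (Mvec g) (Mvec g) μ p)
          - ∑ μ, Mvec g μ p * Pf g (Mvec g) n μ p)
        + ((∑ μ, Mvec g μ p * Pf g a a μ p) - ∑ μ, a μ p * Pf g a (Mvec g) μ p)
        + ((∑ μ, Mvec g μ p * Pf g s s μ p) - ∑ μ, s μ p * Pf g s (Mvec g) μ p) := by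
    simp only [Pi.add_apply]
    rw [dOne_eq g hM n (Mvec g) p, dOne_eq g had (Mvec g) a p, dOne_eq g hsd (Mvec g) s p]
  rw [hRexp, div_eq g p, div_frame g hf p]
  simp only [PMM, Paa, Pss, PaM, PsM, mul_zero, mul_neg, sub_zero, neg_neg,
    Finset.sum_const_zero, zero_sub, Finset.sum_neg_distrib]
  rw [Finset.sum_sub_distrib, Finset.sum_add_distrib]
  ring

end Statement15Aux


end FFE

/-- In the specific null foliation adapted frame `(s, M, α♯, n)`,
where `M` has chart components `M^r = g^{r3}g^{34} − g^{33}g^{r4}` (a null vector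
field tangent to the leaves), one has `*d*M♭ = 0` (equivalently `∇_μ M^μ = 0`) if
and only if `dM♭(n,M) + dα(M,α♯) + ds♭(M,s) = 0`. -/
theorem FFE.divergence_M_iff (g : Lorentzian) (hdeg : g.NullAdapted)
    (s a n : Vec) (hframe : Frame g s (Mvec g) a n)
    (hs2 : s 2 = 0) (hs3 : s 3 = 0) :
    g.div (Mvec g) = 0 ↔
      dOne (g.flat (Mvec g)) n (Mvec g) + dOne (g.flat a) (Mvec g) a +
        dOne (g.flat s) (Mvec g) s = 0 := by
  rw [key_identity g hframe]
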